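/- arXiv:1109.5416 — 3 statements merged into one kernel-verified Lean document; each statement's English description precedes it below -/
import Mathlib

section
/- Let K be a finite nonempty set of states, A an alphabet, and δ : K → K → Language A a transition matrix whose entries are formal languages over A. Define the one-step relation Step on K × (List A) by Step (k₀, w) (k₁, w') ↔ ∃ u ∈ δ k₀ k₁, w' = w ++ u, and let Stepⁿ denote the n-fold relational composition of Step (Step⁰ being equality). Let δⁿ denote the n-th matrix power of δ, using matrix multiplication over the semiring of languages (entrywise (M·N)[i,k] = ⋃_{j∈K} M[i,j]·N[j,k] with language concatenation, and δ⁰ the identity matrix with unit language {ε} on the diagonal and the empty language elsewhere). Then for every n ∈ ℕ, every x, y ∈ K, and all words v, w ∈ List A: Stepⁿ (x, v) (y, w) holds if and only if there exists u ∈ (δⁿ)[x,y] with w = v ++ u. -/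
/-- The n-fold composition of a relation: `relPow R 0` is equality and
`relPow R (n+1)` is `relPow R n` followed by one more `R`-step. -/
def relPow {α : Type*} (R : α → α → Prop) : ℕ → α → α → Prop
  | 0 => Eq
  | n + 1 => Relation.Comp (relPow R n) R

/-- One-step relation of an FSM with transition matrix `δ` on configurations
`(k, w) : K × List A`: a transition from `(k₀, w)` to `(k₁, w ++ u)` consumes
a word `u ∈ δ[k₀,k₁]`. -/
def fsmStep {K A : Type*} (δ : Matrix K K (Language A)) :
    K × List A → K × List A → Prop :=
  fun c c' => ∃ u ∈ δ c.1 c'.1, c'.2 = c.2 ++ u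

lemma mem_language_sum {A K : Type*} (s : Finset K) (f : K → Language A)
    (x : List A) : x ∈ ∑ k ∈ s, f k ↔ ∃ k ∈ s, x ∈ f k := by
  classical
  induction s using Finset.induction with
  | empty => simp [Language.notMem_zero]
  | insert _ _ h ih => simp [Finset.sum_insert h, Language.mem_add, ih]

theorem fsm_segment_iff_matrix_power {K A : Type*} [Fintype K] [DecidableEq K]
    [Nonempty K] (δ : Matrix K K (Language A)) :
    ∀ (n : ℕ) (x y : K) (v w : List A),
      relPow (fsmStep δ) n (x, v) (y, w) ↔ ∃ u ∈ (δ ^ n) x y, w = v ++ u := by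
  intro n
  induction n with
  | zero =>
    intro x y v w
    simp only [relPow, pow_zero, Matrix.one_apply]
    constructor
    · rintro h
      obtain ⟨hx, hv⟩ := Prod.mk.injEq .. ▸ h
      exact ⟨[], by simp [hx, Language.mem_one], by simp [hv]⟩
    · rintro ⟨u, hu, rfl⟩
      by_cases hxy : x = y
      · subst hxy
        simp [Language.mem_one] at hu
        simp [hu]
      · rw [if_neg hxy] at hu
        exact absurd hu (Language.notMem_zero u)
  | succ n ih =>
    intro x y v w
    constructor
    · rintro ⟨⟨z, w'⟩, hn, u₂, hu₂, rfl⟩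
      obtain ⟨u₁, hu₁, rfl⟩ := (ih x z v w').mp hn
      refine ⟨u₁ ++ u₂, ?_, by simp⟩
      rw [pow_succ, Matrix.mul_apply, mem_language_sum]
      exact ⟨z, Finset.mem_univ z, Language.append_mem_mul hu₁ hu₂⟩
    · rintro ⟨u, hu, rfl⟩
      rw [pow_succ, Matrix.mul_apply, mem_language_sum] at hu
      obtain ⟨z, -, hu⟩ := hu
      rw [Language.mem_mul] at hu
      obtain ⟨a, ha, b, hb, rfl⟩ := hu
      exact ⟨(z, v ++ a), (ih x z v (v ++ a)).mpr ⟨a, ha, rfl⟩,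
        b, hb, by simp⟩
end

section
/- Let K be a finite nonempty set of states, A an alphabet, δ : K → K → Language A a transition matrix, and S, H ∈ K distinguished start and halt states. Define the one-step relation Step on K × (List A) by Step (k₀, w) (k₁, w') ↔ ∃ u ∈ δ k₀ k₁, w' = w ++ u. The language accepted by the FSM is {w : List A | Relation.ReflTransGen Step (S, []) (H, w)}. Then this accepted language equals ⋃_{n ∈ ℕ} (δⁿ)[S, H], where δⁿ is the n-th matrix power of δ over the semiring of languages. -/
lemma lang_mem_sum {A ι : Type*} (s : Finset ι) (f : ι → Language A) (x : List A) :
    x ∈ ∑ j ∈ s, f j ↔ ∃ j ∈ s, x ∈ f j := by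
  classical
  induction s using Finset.induction with
  | empty => simp [Language.notMem_zero]
  | insert _ _ h ih => simp [Finset.sum_insert h, Language.mem_add, ih]

lemma fsm_back {K A : Type*} [Fintype K] [DecidableEq K]
    (δ : Matrix K K (Language A)) :
    ∀ (n : ℕ) (k k' : K) (u w₀ : List A), u ∈ (δ ^ n) k k' →
      Relation.ReflTransGen (fsmStep δ) (k, w₀) (k', w₀ ++ u) := by
  intro n
  induction n with
  | zero =>
    intro k k' u w₀ hu
    simp only [pow_zero, Matrix.one_apply] at hu
    split at hu
    case isTrue h =>
      rcases (Language.mem_one u).mp hu with rfl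
      subst h
      simpa using Relation.ReflTransGen.refl
    case isFalse => exact absurd hu (by simp [Language.notMem_zero])
  | succ n ih =>
    intro k k' u w₀ hu
    rw [pow_succ, Matrix.mul_apply] at hu
    rcases (lang_mem_sum _ _ _).mp hu with ⟨j, -, hj⟩
    rcases Language.mem_mul.mp hj with ⟨u₁, h₁, u₂, h₂, rfl⟩
    rw [← List.append_assoc]
    exact (ih k j u₁ w₀ h₁).tail ⟨u₂, h₂, rfl⟩

theorem fsm_accepted_language_eq_union_matrix_powers {K A : Type*} [Fintype K]
    [DecidableEq K] [Nonempty K] (δ : Matrix K K (Language A)) (S H : K) :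
    {w : List A | Relation.ReflTransGen (fsmStep δ) (S, []) (H, w)} =
      ⋃ n : ℕ, ((δ ^ n) S H : Set (List A)) := by
  ext w
  simp only [Set.mem_setOf_eq, Set.mem_iUnion, SetLike.mem_coe]
  constructor
  · intro h
    have key : ∀ c : K × List A, Relation.ReflTransGen (fsmStep δ) (S, []) c →
        ∃ n, c.2 ∈ (δ ^ n) S c.1 := by
      intro c hc
      induction hc with
      | refl => exact ⟨0, by simp [Matrix.one_apply, Language.mem_one]⟩
      | tail hab hbc ih =>
        rcases ih with ⟨n, hn⟩
        rcases hbc with ⟨u, hu, heq⟩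
        refine ⟨n + 1, ?_⟩
        rw [pow_succ, Matrix.mul_apply, lang_mem_sum]
        exact ⟨_, Finset.mem_univ _, heq ▸ Language.append_mem_mul hn hu⟩
    obtain ⟨n, hn⟩ := key (H, w) h; exact Set.mem_iUnion.mpr ⟨n, hn⟩
  · rintro hn; obtain ⟨n, hn⟩ := Set.mem_iUnion.mp hn
    simpa using fsm_back δ n S H w [] hn
end

section
/- For formal languages L, M over an alphabet A (elements of Mathlib's Language A, a semiring with union as addition, concatenation as multiplication, and Kleene star L∗ = ⋃_{n∈ℕ} Lⁿ), the denesting identity holds: (L + M)∗ = (L∗ * M)∗ * L∗. -/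
open Computability

theorem language_star_denesting {A : Type*} (L M : Language A) :
    (L + M)∗ = (L∗ * M)∗ * L∗ := by
  apply le_antisymm
  · apply kstar_le_of_mul_le_left
    · calc (1 : Language A) = 1 * 1 := (one_mul 1).symm
        _ ≤ (L∗ * M)∗ * L∗ := mul_le_mul' one_le_kstar one_le_kstar
    · rw [mul_add]
      apply add_le
      · rw [mul_assoc]
        exact mul_le_mul' le_rfl kstar_mul_le_kstar
      · calc (L∗ * M)∗ * L∗ * M = (L∗ * M)∗ * (L∗ * M) := mul_assoc _ _ _
          _ ≤ (L∗ * M)∗ := kstar_mul_le_kstar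
          _ = (L∗ * M)∗ * 1 := (mul_one _).symm
          _ ≤ (L∗ * M)∗ * L∗ := mul_le_mul' le_rfl one_le_kstar
  · have hL : L∗ ≤ (L + M)∗ := kstar_mono (le_add_of_nonneg_right zero_le)
    have hM : M ≤ (L + M)∗ := le_trans (le_add_of_nonneg_left zero_le) le_kstar
    have h1 : L∗ * M ≤ (L + M)∗ := by
      calc L∗ * M ≤ (L + M)∗ * (L + M)∗ := mul_le_mul' hL hM
        _ = (L + M)∗ := kstar_mul_kstar _
    calc (L∗ * M)∗ * L∗ ≤ ((L + M)∗)∗ * (L + M)∗ := mul_le_mul' (kstar_mono h1) hL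
      _ = (L + M)∗ * (L + M)∗ := by rw [kstar_idem]
      _ = (L + M)∗ := kstar_mul_kstar _
end
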